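/- Let k be an algebraically closed field of characteristic 3. There exist polynomials b₄, b₆ ∈ k[t] with deg b₄ ≤ 4 and deg b₆ ≤ 6 such that, with b₂ = t, the discriminant Δ = −b₂²(b₂b₆ − b₄²) + b₄³ equals t¹² + t¹⁰ + t² + 1 = (t² + 1)²(t⁸ − t⁶ + t⁴ − t² + 1) = (t² + 1)(t¹⁰ + 1). Moreover this polynomial has exactly ten distinct roots in k, all nonzero and distinct from the roots of b₂: the two square roots of −1, each with multiplicity 2, and eight simple roots. (This realizes the configuration I₂² I₁⁸ of multiplicative fibres on a rational elliptic surface in characteristic 3.) -/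
import Mathlib

open Polynomial

theorem stmt14 {k : Type*} [Field k] [IsAlgClosed k] [CharP k 3] [DecidableEq k]
    (D : k[X]) (hD : D = X ^ 12 + X ^ 10 + X ^ 2 + 1) :
    (∃ b₄ b₆ : k[X], b₄.degree ≤ 4 ∧ b₆.degree ≤ 6 ∧
      -(X : k[X]) ^ 2 * (X * b₆ - b₄ ^ 2) + b₄ ^ 3 = D) ∧
    D = (X ^ 2 + 1) ^ 2 * (X ^ 8 - X ^ 6 + X ^ 4 - X ^ 2 + 1) ∧
    D = (X ^ 2 + 1) * (X ^ 10 + 1) ∧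
    D.roots.toFinset.card = 10 ∧
    (∀ x : k, D.eval x = 0 → x ≠ 0) ∧
    (∀ x : k, x ^ 2 = -1 → D.rootMultiplicity x = 2) ∧
    (∀ x : k, D.eval x = 0 → x ^ 2 ≠ -1 → D.rootMultiplicity x = 1) ∧
    (D.roots.toFinset.filter fun x => D.rootMultiplicity x = 1).card = 8 := by
  have h3 : (3 : k[X]) = 0 := by
    exact_mod_cast map_eq_zero_iff (C : k →+* k[X]) C_injective |>.mpr
      (by exact_mod_cast CharP.cast_eq_zero k 3)
  set P : k[X] := X ^ 10 + 1 with hPdef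
  set Q : k[X] := X ^ 2 + 1 with hQdef
  -- degrees
  have hPdeg : P.natDegree = 10 := by rw [hPdef]; compute_degree!
  have hQdeg : Q.natDegree = 2 := by rw [hQdef]; compute_degree!
  have hPne : P ≠ 0 := fun h => by simp [h] at hPdeg
  have hQne : Q ≠ 0 := fun h => by simp [h] at hQdeg
  -- separability
  have hPsep : P.Separable := by
    have h10 : (10 : k) = 1 := by
      have h := CharP.cast_eq_zero k 3; linear_combination (3 : k) * h
    have hder : derivative P = X ^ 9 := by
      rw [hPdef, derivative_add, derivative_X_pow, derivative_one]
      push_cast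
      rw [h10, map_one]; ring
    rw [Polynomial.separable_def, hder]
    exact ⟨1, -X, by rw [hPdef]; ring⟩
  have hQsep : Q.Separable := by
    have h2 : (2 : k) = -1 := by
      have h := CharP.cast_eq_zero k 3; linear_combination h
    have hder : derivative Q = -X := by
      rw [hQdef, derivative_add, derivative_X_pow, derivative_one]
      push_cast
      rw [h2, map_neg, map_one]; ring
    rw [Polynomial.separable_def, hder]
    exact ⟨1, X, by rw [hQdef]; ring⟩
  have hPnodup := nodup_roots hPsep
  have hQnodup := nodup_roots hQsep
  -- root counts
  have hPcard : Multiset.card P.roots = 10 := by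
    rw [splits_iff_card_roots.mp (IsAlgClosed.splits P), hPdeg]
  have hQcard : Multiset.card Q.roots = 2 := by
    rw [splits_iff_card_roots.mp (IsAlgClosed.splits Q), hQdeg]
  -- factorization
  have hDQP : D = Q * P := by rw [hD, hQdef, hPdef]; ring
  have hDne : D ≠ 0 := by rw [hDQP]; exact mul_ne_zero hQne hPne
  -- roots of Q are roots of P
  have hQrootP : ∀ x : k, x ^ 2 = -1 → P.eval x = 0 := by
    intro x hx
    have : P.eval x = x ^ 10 + 1 := by rw [hPdef]; simp
    rw [this]
    linear_combination (x ^ 8 - x ^ 6 + x ^ 4 - x ^ 2 + 1) * hx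
  have hQevalIff : ∀ x : k, Q.eval x = 0 ↔ x ^ 2 = -1 := by
    intro x
    have : Q.eval x = x ^ 2 + 1 := by rw [hQdef]; simp
    rw [this]
    constructor <;> intro h <;> linear_combination h
  have hQsubP : Q.roots ⊆ P.roots := by
    intro x hx
    rw [mem_roots hQne] at hx
    rw [mem_roots hPne]
    exact hQrootP x ((hQevalIff x).mp hx)
  have hDroots : D.roots = Q.roots + P.roots := by rw [hDQP, roots_mul (hDQP ▸ hDne)]
  have hSfin : D.roots.toFinset = P.roots.toFinset := by
    rw [hDroots, Multiset.toFinset_add]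
    apply Finset.union_eq_right.mpr
    intro x hx
    rw [Multiset.mem_toFinset] at hx ⊢
    exact hQsubP hx
  have hScard : D.roots.toFinset.card = 10 := by
    rw [hSfin, Multiset.toFinset_card_of_nodup hPnodup, hPcard]
  -- multiplicity one for separable polys
  have hPmult : ∀ x : k, P.eval x = 0 → P.rootMultiplicity x = 1 := by
    intro x hx
    rw [← count_roots]
    exact Multiset.count_eq_one_of_mem hPnodup (by rw [mem_roots hPne]; exact hx)
  have hQmult : ∀ x : k, x ^ 2 = -1 → Q.rootMultiplicity x = 1 := by
    intro x hx
    rw [← count_roots]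
    exact Multiset.count_eq_one_of_mem hQnodup
      (by rw [mem_roots hQne]; exact (hQevalIff x).mpr hx)
  have hDmult : ∀ x : k, D.rootMultiplicity x = Q.rootMultiplicity x + P.rootMultiplicity x := by
    intro x
    rw [hDQP, rootMultiplicity_mul (hDQP ▸ hDne)]
  -- the six claims
  have claim2 : ∀ x : k, x ^ 2 = -1 → D.rootMultiplicity x = 2 := by
    intro x hx
    rw [hDmult, hQmult x hx, hPmult x (hQrootP x hx)]
  have claim3 : ∀ x : k, D.eval x = 0 → x ^ 2 ≠ -1 → D.rootMultiplicity x = 1 := by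
    intro x hx hne
    have hQx : Q.eval x ≠ 0 := fun h => hne ((hQevalIff x).mp h)
    have hPx : P.eval x = 0 := by
      rw [hDQP, eval_mul] at hx
      rcases mul_eq_zero.mp hx with h | h
      · exact absurd h hQx
      · exact h
    have hQ0 : Q.rootMultiplicity x = 0 := rootMultiplicity_eq_zero hQx
    rw [hDmult, hQ0, hPmult x hPx]
  refine ⟨⟨X ^ 4 + 1, -X ^ 3, ?_, ?_, ?_⟩, by rw [hD]; ring, by rw [hD]; ring, hScard, ?_, claim2,
    claim3, ?_⟩
  · apply le_trans (degree_add_le _ _)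
    simp [degree_X_pow]
  · rw [degree_neg]
    apply le_trans (degree_pow_le _ _)
    simp [degree_X]
    norm_num
  · rw [hD]; linear_combination (X : k[X]) ^ 8 * h3 + (X : k[X]) ^ 6 * h3 + (X : k[X]) ^ 4 * h3
  · intro x hx h0
    rw [h0] at hx
    simp [hD] at hx
  · -- filter card = 8
    have hfilt : (D.roots.toFinset.filter fun x => ¬ D.rootMultiplicity x = 1) =
        Q.roots.toFinset := by
      ext x
      simp only [Finset.mem_filter, Multiset.mem_toFinset]
      constructor
      · rintro ⟨hxS, hx1⟩
        by_cases hc : x ^ 2 = -1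
        · rw [mem_roots hQne]
          exact (hQevalIff x).mpr hc
        · exfalso
          apply hx1
          apply claim3 x _ hc
          rw [mem_roots hDne] at hxS
          exact hxS
      · intro hxQ
        have hx2 : x ^ 2 = -1 := (hQevalIff x).mp ((mem_roots hQne).mp hxQ)
        refine ⟨?_, by rw [claim2 x hx2]; norm_num⟩
        rw [mem_roots hDne]
        have := hQsubP hxQ
        rw [mem_roots hPne] at this
        show eval x D = 0
        rw [hDQP, eval_mul, this, mul_zero]
    have hfc : (D.roots.toFinset.filter fun x => ¬ D.rootMultiplicity x = 1).card = 2 := by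
      rw [hfilt, Multiset.toFinset_card_of_nodup hQnodup, hQcard]
    have := Finset.card_filter_add_card_filter_not (s := D.roots.toFinset)
      (p := fun x => D.rootMultiplicity x = 1)
    omega
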